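/- For every n > 3, there exists an instance of the virus inoculation game on the star graph S_n and friendship factors F_s < F_l such that the worst friendship Nash equilibrium under F_l has strictly higher social cost than the worst friendship Nash equilibrium under F_s; hence the Windfall of Friendship is not monotone in F. Concretely, with C = 5L/(2n) + F_l·L/n, F_l = 3/4 and F_s = 1/8, under F_l there is an FNE where only the center and one leaf are insecure (cost (n−2)C + 4L/n) while under F_s the worst FNE has only the center secure (cost C + (n−1)L/n), and (n−2)C + 4L/n > C + (n−1)L/n. -/

import Mathlib

open Finset
open scoped Classical

noncomputable section

variable {V : Type*} [Fintype V] [DecidableEq V]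

/-- Reachability through insecure players: a path along edges whose endpoints are all insecure. -/
def insecureReach (G : SimpleGraph V) (a : V → Bool) : V → V → Prop :=
  Relation.ReflTransGen (fun x y => G.Adj x y ∧ a x = false ∧ a y = false)

/-- Size of `i`'s attack component (if `i` is secure: the size of the component that would
result if `i` became insecure). -/
def compSize (G : SimpleGraph V) (a : V → Bool) (i : V) : ℕ :=
  {j | insecureReach G (Function.update a i false) i j}.ncard

/-- Actual individual cost: `C` if inoculated, else `L · k_i / n`. -/
def actualCost (G : SimpleGraph V) (C L : ℝ) (a : V → Bool) (i : V) : ℝ :=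
  if a i = true then C else L * (compSize G a i) / (Fintype.card V)

def socialCost (G : SimpleGraph V) (C L : ℝ) (a : V → Bool) : ℝ :=
  ∑ i, actualCost G C L a i

/-- Perceived cost: actual cost plus `F` times the sum of the neighbors' actual costs. -/
def perceivedCost (G : SimpleGraph V) (C L F : ℝ) (a : V → Bool) (i : V) : ℝ :=
  actualCost G C L a i +
    F * ∑ j ∈ Finset.univ.filter (fun j => G.Adj i j), actualCost G C L a j

/-- Pure Nash equilibrium: no unilateral deviation lowers the actual cost. -/
def isNE (G : SimpleGraph V) (C L : ℝ) (a : V → Bool) : Prop :=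
  ∀ (i : V) (b : Bool),
    actualCost G C L a i ≤ actualCost G C L (Function.update a i b) i

/-- Friendship Nash equilibrium: no unilateral deviation lowers the perceived cost. -/
def isFNE (G : SimpleGraph V) (C L F : ℝ) (a : V → Bool) : Prop :=
  ∀ (i : V) (b : Bool),
    perceivedCost G C L F a i ≤ perceivedCost G C L F (Function.update a i b) i

/-- Star graph on `Fin n` with center `0`. -/
def starG (n : ℕ) : SimpleGraph (Fin n) :=
  SimpleGraph.fromRel (fun i _ => i.val = 0)

section Helpers
variable {n : ℕ}

lemma starG_adj (hn : 0 < n) {x y : Fin n} :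
    (starG n).Adj x y ↔ x ≠ y ∧ (x = ⟨0, hn⟩ ∨ y = ⟨0, hn⟩) := by
  simp only [starG, SimpleGraph.fromRel_adj, Fin.ext_iff]

lemma reach_eq (hn : 0 < n) (a : Fin n → Bool) (i : Fin n) (hi : a i = false) :
    {j | insecureReach (starG n) a i j} =
      if a ⟨0, hn⟩ = false then {j | a j = false} else {i} := by
  set z : Fin n := ⟨0, hn⟩
  by_cases hz : a z = false
  · simp only [hz, if_pos rfl]
    ext j
    simp only [Set.mem_setOf_eq]
    constructor
    · intro h
      induction h with
      | refl => exact hi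
      | tail _ h ih => exact h.2.2
    · intro hj
      have step : ∀ x y : Fin n, x ≠ y → a x = false → a y = false →
          (x = z ∨ y = z) → insecureReach (starG n) a x y := by
        intro x y hxy hx hy hor
        exact Relation.ReflTransGen.single ⟨(starG_adj hn).2 ⟨hxy, hor⟩, hx, hy⟩
      by_cases hij : i = j
      · exact hij ▸ Relation.ReflTransGen.refl
      by_cases hizz : i = z
      · exact step i j hij hi hj (Or.inl hizz)
      by_cases hjz : j = z
      · exact step i j hij hi hj (Or.inr hjz)
      · exact (step i z hizz hi hz (Or.inr rfl)).trans
          (step z j (fun h => hjz h.symm) hz hj (Or.inl rfl))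
  · rw [if_neg hz]
    ext j
    simp only [Set.mem_setOf_eq, Set.mem_singleton_iff]
    constructor
    · intro h
      induction h with
      | refl => rfl
      | tail _ h ih =>
        exfalso
        rcases ((starG_adj hn).1 h.1).2 with h0 | h0
        · exact hz (show a ⟨0, hn⟩ = false by rw [← h0]; exact h.2.1)
        · exact hz (show a ⟨0, hn⟩ = false by rw [← h0]; exact h.2.2)
    · rintro rfl; exact Relation.ReflTransGen.refl

end Helpers
section Helpers2
variable {n : ℕ}

/-- number of insecure players -/
def insCard (a : Fin n → Bool) : ℕ := (Finset.univ.filter (fun j => a j = false)).card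

lemma update_self_false (a : Fin n → Bool) (i : Fin n) (hi : a i = false) :
    Function.update a i false = a := by rw [← hi, Function.update_eq_self]

lemma compSize_eq_of_false (hn : 0 < n) (a : Fin n → Bool) (i : Fin n) (hi : a i = false) :
    compSize (starG n) a i = if a ⟨0, hn⟩ = false then insCard a else 1 := by
  unfold compSize
  rw [update_self_false a i hi, reach_eq hn a i hi]
  split
  · rw [show {j | a j = false} =
      ↑(Finset.univ.filter (fun j => a j = false)) by ext j; simp]
    exact Set.ncard_coe_finset _
  · exact Set.ncard_singleton i

lemma actualCost_true (C L : ℝ) (a : Fin n → Bool) (i : Fin n) (hi : a i = true) :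
    actualCost (starG n) C L a i = C := by simp [actualCost, hi]

lemma actualCost_false (hn : 0 < n) (C L : ℝ) (a : Fin n → Bool) (i : Fin n)
    (hi : a i = false) :
    actualCost (starG n) C L a i =
      if a ⟨0, hn⟩ = false then L * (insCard a) / n else L / n := by
  rw [actualCost, if_neg (by simp [hi]), compSize_eq_of_false hn a i hi]
  split <;> simp [Fintype.card_fin]

lemma neighbors_leaf (hn : 0 < n) (i : Fin n) (hi : i ≠ ⟨0, hn⟩) :
    Finset.univ.filter (fun j => (starG n).Adj i j) = {⟨0, hn⟩} := by
  ext j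
  simp only [Finset.mem_filter, Finset.mem_univ, true_and, Finset.mem_singleton,
    starG_adj hn]
  constructor
  · rintro ⟨h1, h2 | h2⟩
    · exact absurd h2 hi
    · exact h2
  · rintro rfl; exact ⟨hi, Or.inr rfl⟩

lemma neighbors_center (hn : 0 < n) :
    Finset.univ.filter (fun j => (starG n).Adj (⟨0, hn⟩ : Fin n) j) =
      Finset.univ.erase ⟨0, hn⟩ := by
  ext j
  simp only [Finset.mem_filter, Finset.mem_univ, true_and, Finset.mem_erase, starG_adj hn]
  aesop

lemma perceived_leaf (hn : 0 < n) (C L F : ℝ) (a : Fin n → Bool) (i : Fin n)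
    (hi : i ≠ ⟨0, hn⟩) :
    perceivedCost (starG n) C L F a i =
      actualCost (starG n) C L a i + F * actualCost (starG n) C L a ⟨0, hn⟩ := by
  rw [perceivedCost, neighbors_leaf hn i hi, Finset.sum_singleton]

lemma perceived_center (hn : 0 < n) (C L F : ℝ) (a : Fin n → Bool) :
    perceivedCost (starG n) C L F a ⟨0, hn⟩ =
      actualCost (starG n) C L a ⟨0, hn⟩ +
        F * ∑ j ∈ Finset.univ.erase ⟨0, hn⟩, actualCost (starG n) C L a j := by
  rw [perceivedCost, neighbors_center hn]

lemma sum_boolcost (s : Finset (Fin n)) (a : Fin n → Bool) (f : Fin n → ℝ) (c0 c1 : ℝ)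
    (h0 : ∀ j ∈ s, a j = false → f j = c0) (h1 : ∀ j ∈ s, a j = true → f j = c1) :
    ∑ j ∈ s, f j =
      (s.filter (fun j => a j = false)).card * c0 +
      (s.filter (fun j => a j = true)).card * c1 := by
  rw [← Finset.sum_filter_add_sum_filter_not s (fun j => a j = false)]
  congr 1
  · rw [Finset.sum_congr rfl (fun j hj => h0 j (Finset.mem_filter.1 hj).1
      (Finset.mem_filter.1 hj).2), Finset.sum_const, nsmul_eq_mul]
  · rw [show s.filter (fun j => ¬ a j = false) = s.filter (fun j => a j = true) by
      apply Finset.filter_congr; intro j _; simp]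
    rw [Finset.sum_congr rfl (fun j hj => h1 j (Finset.mem_filter.1 hj).1
      (Finset.mem_filter.1 hj).2), Finset.sum_const, nsmul_eq_mul]

lemma socialCost_split (hn : 0 < n) (C L : ℝ) (a : Fin n → Bool) :
    socialCost (starG n) C L a =
      actualCost (starG n) C L a ⟨0, hn⟩ +
        ∑ j ∈ Finset.univ.erase ⟨0, hn⟩, actualCost (starG n) C L a j := by
  rw [socialCost, ← Finset.add_sum_erase Finset.univ _ (Finset.mem_univ ⟨0, hn⟩)]

end Helpers2
section Helpers3
variable {n : ℕ}

lemma insCard_update_true (a : Fin n → Bool) (i : Fin n) (hi : a i = false) :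
    insCard (Function.update a i true) = insCard a - 1 := by
  unfold insCard
  rw [show Finset.univ.filter (fun j => Function.update a i true j = false) =
      (Finset.univ.filter (fun j => a j = false)).erase i by
    ext j
    by_cases hji : j = i <;>
      simp [Function.update_apply, hji, hi, Finset.mem_erase]]
  rw [Finset.card_erase_of_mem (by simp [hi])]

lemma insCard_update_false (a : Fin n → Bool) (i : Fin n) (hi : a i = true) :
    insCard (Function.update a i false) = insCard a + 1 := by
  unfold insCard
  rw [show Finset.univ.filter (fun j => Function.update a i false j = false) =
      insert i (Finset.univ.filter (fun j => a j = false)) by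
    ext j
    by_cases hji : j = i <;>
      simp [Function.update_apply, hji, hi, Finset.mem_insert]]
  rw [Finset.card_insert_of_notMem (by simp [hi])]

lemma insCard_pos (hn : 0 < n) (a : Fin n → Bool) (i : Fin n) (hi : a i = false) :
    1 ≤ insCard a :=
  Finset.card_pos.2 ⟨i, by simp [hi]⟩

lemma insCard_le (a : Fin n → Bool) : insCard a ≤ n := by
  simpa [insCard] using Finset.card_filter_le Finset.univ (fun j => a j = false)

lemma card_filter_erase_false (hn : 0 < n) (a : Fin n → Bool) (hz : a ⟨0, hn⟩ = false) :
    ((Finset.univ.erase ⟨0, hn⟩).filter (fun j => a j = false)).card = insCard a - 1 := by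
  rw [Finset.filter_erase, Finset.card_erase_of_mem (by simp [hz])]; rfl

lemma card_filter_erase_false' (hn : 0 < n) (a : Fin n → Bool) (hz : a ⟨0, hn⟩ = true) :
    ((Finset.univ.erase ⟨0, hn⟩).filter (fun j => a j = false)).card = insCard a := by
  rw [Finset.filter_erase, Finset.erase_eq_of_notMem (by simp [hz])]; rfl

lemma card_filter_add (s : Finset (Fin n)) (a : Fin n → Bool) :
    (s.filter (fun j => a j = false)).card + (s.filter (fun j => a j = true)).card
      = s.card := by
  rw [show s.filter (fun j => a j = true) = s.filter (fun j => ¬ a j = false) by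
    apply Finset.filter_congr; intro j _; simp]
  exact Finset.card_filter_add_card_filter_not _

lemma card_erase_univ (hn : 0 < n) :
    (Finset.univ.erase (⟨0, hn⟩ : Fin n)).card = n - 1 := by
  rw [Finset.card_erase_of_mem (Finset.mem_univ _), Finset.card_univ, Fintype.card_fin]

end Helpers3
section Helpers4
variable {n : ℕ}

lemma insCard_le_of_center_true (hn : 0 < n) (a : Fin n → Bool) (hz : a ⟨0, hn⟩ = true) :
    insCard a ≤ n - 1 := by
  have : Finset.univ.filter (fun j => a j = false) ⊆ Finset.univ.erase ⟨0, hn⟩ := by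
    intro j hj
    simp only [Finset.mem_filter] at hj
    refine Finset.mem_erase.2 ⟨?_, Finset.mem_univ j⟩
    rintro rfl; rw [hz] at hj; exact absurd hj.2 (by simp)
  calc insCard a ≤ (Finset.univ.erase (⟨0, hn⟩ : Fin n)).card := Finset.card_le_card this
    _ = n - 1 := card_erase_univ hn

lemma sum_leaf_cost_false (hn : 0 < n) (C L : ℝ) (a : Fin n → Bool)
    (hz : a ⟨0, hn⟩ = false) :
    ∑ j ∈ Finset.univ.erase ⟨0, hn⟩, actualCost (starG n) C L a j =
      ((insCard a : ℝ) - 1) * (L * insCard a / n) + ((n : ℝ) - insCard a) * C := by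
  rw [sum_boolcost (Finset.univ.erase ⟨0, hn⟩) a _ (L * insCard a / n) C
    (fun j _ hj => by rw [actualCost_false hn C L a j hj, if_pos hz])
    (fun j _ hj => actualCost_true C L a j hj)]
  rw [card_filter_erase_false hn a hz]
  have h1 : 1 ≤ insCard a := insCard_pos hn a _ hz
  have h2 : insCard a ≤ n := insCard_le a
  have h3 : ((Finset.univ.erase (⟨0, hn⟩ : Fin n)).filter (fun j => a j = true)).card
      = n - insCard a := by
    have := card_filter_add (Finset.univ.erase (⟨0, hn⟩ : Fin n)) a
    rw [card_filter_erase_false hn a hz, card_erase_univ hn] at this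
    omega
  rw [h3]
  push_cast [Nat.cast_sub h1, Nat.cast_sub h2]
  ring

lemma sum_leaf_cost_true (hn : 0 < n) (C L : ℝ) (a : Fin n → Bool)
    (hz : a ⟨0, hn⟩ = true) :
    ∑ j ∈ Finset.univ.erase ⟨0, hn⟩, actualCost (starG n) C L a j =
      (insCard a : ℝ) * (L / n) + ((n : ℝ) - 1 - insCard a) * C := by
  rw [sum_boolcost (Finset.univ.erase ⟨0, hn⟩) a _ (L / n) C
    (fun j _ hj => by rw [actualCost_false hn C L a j hj, if_neg (by simp [hz])])
    (fun j _ hj => actualCost_true C L a j hj)]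
  rw [card_filter_erase_false' hn a hz]
  have h2 : insCard a ≤ n - 1 := insCard_le_of_center_true hn a hz
  have h3 : ((Finset.univ.erase (⟨0, hn⟩ : Fin n)).filter (fun j => a j = true)).card
      = n - 1 - insCard a := by
    have := card_filter_add (Finset.univ.erase (⟨0, hn⟩ : Fin n)) a
    rw [card_filter_erase_false' hn a hz, card_erase_univ hn] at this
    omega
  rw [h3]
  have h4 : (1:ℕ) ≤ n := hn
  push_cast [Nat.cast_sub h2, Nat.cast_sub h4]
  ring

end Helpers4
section Helpers5
variable {n : ℕ}

lemma fne_of {G : SimpleGraph (Fin n)} {C L F : ℝ} {a : Fin n → Bool}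
    (h : ∀ i, perceivedCost G C L F a i ≤
      perceivedCost G C L F (Function.update a i (!a i)) i) :
    isFNE G C L F a := by
  intro i b
  rcases Bool.eq_or_eq_not b (a i) with hb | hb
  · rw [hb, Function.update_eq_self]
  · rw [hb]; exact h i

/-- the profile where exactly the center and leaf 1 are insecure -/
def aL (n : ℕ) : Fin n → Bool := fun i => decide (1 < i.val)

lemma aL_z (hp : 0 < n) : aL n ⟨0, hp⟩ = false := by simp [aL]

lemma insCard_aL (hn : 3 < n) :
    insCard (aL n) = 2 := by
  have hp : 0 < n := by omega
  unfold insCard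
  rw [show Finset.univ.filter (fun j => aL n j = false) =
      {(⟨0, hp⟩ : Fin n), ⟨1, by omega⟩} by
    ext j
    simp only [Finset.mem_filter, Finset.mem_univ, true_and, Finset.mem_insert,
      Finset.mem_singleton, aL, decide_eq_false_iff_not, not_lt, Fin.ext_iff]
    omega]
  rw [Finset.card_insert_of_notMem (by simp [Fin.ext_iff]), Finset.card_singleton]

end Helpers5
section Helpers6
variable {n : ℕ}

lemma fne_aL (hn : 3 < n) :
    isFNE (starG n) (13 / (4 * (n:ℝ))) 1 (3/4) (aL n) := by
  have hp : 0 < n := by omega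
  have hn4 : (4:ℝ) ≤ n := by exact_mod_cast hn
  have hn0 : (0:ℝ) < n := by linarith
  apply fne_of
  intro i
  by_cases hiz : i = (⟨0, hp⟩ : Fin n)
  · subst hiz
    rw [show (!(aL n ⟨0, hp⟩)) = true by rw [aL_z hp]; rfl]
    set a' := Function.update (aL n) (⟨0, hp⟩ : Fin n) true with ha'
    have ha'z : a' ⟨0, hp⟩ = true := Function.update_self _ _ _
    have hins' : insCard a' = 1 := by
      rw [ha', insCard_update_true _ _ (aL_z hp), insCard_aL hn]
    rw [perceived_center hp, perceived_center hp,
      sum_leaf_cost_false hp _ _ _ (aL_z hp),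
      sum_leaf_cost_true hp _ _ _ ha'z,
      actualCost_false hp _ _ _ _ (aL_z hp), if_pos (aL_z hp),
      actualCost_true _ _ _ _ ha'z, insCard_aL hn, hins']
    push_cast
    have h : (n:ℝ) ≠ 0 := by linarith
    rw [← sub_nonneg]
    rw [show 13 / (4 * (n:ℝ)) + 3 / 4 * (1 * (1 / n) + (n - 1 - 1) * (13 / (4 * n))) -
        (1 * 2 / n + 3 / 4 * ((2 - 1) * (1 * 2 / n) + (n - 2) * (13 / (4 * n)))) = 1 / (2 * n)
      by field_simp; ring]
    positivity
  · by_cases hia : aL n i = false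
    · rw [show (!(aL n i)) = true by rw [hia]; rfl]
      set a' := Function.update (aL n) i true with ha'
      have ha'i : a' i = true := Function.update_self _ _ _
      have ha'z : a' ⟨0, hp⟩ = false := by
        rw [ha', Function.update_of_ne (fun h => hiz h.symm), aL_z hp]
      have hins' : insCard a' = 1 := by
        rw [ha', insCard_update_true _ _ hia, insCard_aL hn]
      rw [perceived_leaf hp _ _ _ _ _ hiz, perceived_leaf hp _ _ _ _ _ hiz,
        actualCost_false hp _ _ _ _ hia, if_pos (aL_z hp),
        actualCost_false hp _ _ _ _ (aL_z hp), if_pos (aL_z hp),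
        actualCost_true _ _ _ _ ha'i,
        actualCost_false hp _ _ _ _ ha'z, if_pos ha'z, insCard_aL hn, hins']
      push_cast
      have h : (n:ℝ) ≠ 0 := by linarith
      rw [← sub_nonneg]
      rw [show 13 / (4 * (n:ℝ)) + 3 / 4 * (1 * 1 / n) -
          (1 * 2 / n + 3 / 4 * (1 * 2 / n)) = 1 / (2 * n) by field_simp; ring]
      positivity
    · have hia' : aL n i = true := by revert hia; cases aL n i <;> simp
      rw [show (!(aL n i)) = false by rw [hia']; rfl]
      set a' := Function.update (aL n) i false with ha'
      have ha'i : a' i = false := Function.update_self _ _ _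
      have ha'z : a' ⟨0, hp⟩ = false := by
        rw [ha', Function.update_of_ne (fun h => hiz h.symm), aL_z hp]
      have hins' : insCard a' = 3 := by
        rw [ha', insCard_update_false _ _ hia', insCard_aL hn]
      rw [perceived_leaf hp _ _ _ _ _ hiz, perceived_leaf hp _ _ _ _ _ hiz,
        actualCost_true _ _ _ _ hia',
        actualCost_false hp _ _ _ _ (aL_z hp), if_pos (aL_z hp),
        actualCost_false hp _ _ _ _ ha'i, if_pos ha'z,
        actualCost_false hp _ _ _ _ ha'z, if_pos ha'z, insCard_aL hn, hins']
      push_cast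
      have h : (n:ℝ) ≠ 0 := by linarith
      rw [← sub_nonneg]
      rw [show 1 * 3 / (n:ℝ) + 3 / 4 * (1 * 3 / n) -
          (13 / (4 * n) + 3 / 4 * (1 * 2 / n)) = 1 / (2 * n) by field_simp; ring]
      positivity

end Helpers6
section Helpers7
variable {n : ℕ}

def aS (n : ℕ) : Fin n → Bool := fun i => i.val == 0

lemma aS_z (hp : 0 < n) : aS n ⟨0, hp⟩ = true := by simp [aS]

lemma aS_leaf (hp : 0 < n) (i : Fin n) (hi : i ≠ ⟨0, hp⟩) : aS n i = false := by
  simp only [aS, beq_eq_false_iff_ne, ne_eq]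
  intro h; exact hi (Fin.ext h)

lemma insCard_aS (hp : 0 < n) : insCard (aS n) = n - 1 := by
  unfold insCard
  rw [show Finset.univ.filter (fun j => aS n j = false) =
      Finset.univ.erase (⟨0, hp⟩ : Fin n) by
    ext j
    simp only [Finset.mem_filter, Finset.mem_univ, true_and, Finset.mem_erase,
      aS, beq_eq_false_iff_ne, ne_eq, Fin.ext_iff]
    tauto]
  exact card_erase_univ hp

lemma socialCost_aS (hn : 3 < n) :
    socialCost (starG n) (13 / (4 * (n:ℝ))) 1 (aS n) =
      13 / (4 * (n:ℝ)) + ((n:ℝ) - 1) * 1 / n := by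
  have hp : 0 < n := by omega
  have hn4 : (4:ℝ) ≤ n := by exact_mod_cast hn
  rw [socialCost_split hp, sum_leaf_cost_true hp _ _ _ (aS_z hp),
    actualCost_true _ _ _ _ (aS_z hp), insCard_aS hp,
    Nat.cast_sub (by omega : 1 ≤ n)]
  push_cast
  have h : (n:ℝ) ≠ 0 := by linarith
  field_simp
  ring

lemma fne_aS (hn : 3 < n) :
    isFNE (starG n) (13 / (4 * (n:ℝ))) 1 (1/8) (aS n) := by
  have hp : 0 < n := by omega
  have hn4 : (4:ℝ) ≤ n := by exact_mod_cast hn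
  have hn0 : (0:ℝ) < n := by linarith
  have h : (n:ℝ) ≠ 0 := by linarith
  apply fne_of
  intro i
  by_cases hiz : i = (⟨0, hp⟩ : Fin n)
  · subst hiz
    rw [show (!(aS n ⟨0, hp⟩)) = false by rw [aS_z hp]; rfl]
    set a' := Function.update (aS n) (⟨0, hp⟩ : Fin n) false with ha'
    have ha'z : a' ⟨0, hp⟩ = false := Function.update_self _ _ _
    have hins' : insCard a' = n := by
      rw [ha', insCard_update_false _ _ (aS_z hp), insCard_aS hp]; omega
    rw [perceived_center hp, perceived_center hp,
      sum_leaf_cost_true hp _ _ _ (aS_z hp),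
      sum_leaf_cost_false hp _ _ _ ha'z,
      actualCost_true _ _ _ _ (aS_z hp),
      actualCost_false hp _ _ _ _ ha'z, if_pos ha'z,
      insCard_aS hp, hins', Nat.cast_sub (by omega : 1 ≤ n)]
    push_cast
    rw [← sub_nonneg]
    rw [show 1 * (n:ℝ) / n + 1 / 8 * ((n - 1) * (1 * n / n) + (n - n) * (13 / (4 * n))) -
        (13 / (4 * n) + 1 / 8 * ((n - 1) * (1 / n) + (n - 1 - (n - 1)) * (13 / (4 * n))))
        = (8 * n - 26 + (n - 1)^2) / (8 * n) by field_simp; ring]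
    apply div_nonneg _ (by linarith)
    nlinarith [sq_nonneg ((n:ℝ) - 1)]
  · rw [show (!(aS n i)) = true by rw [aS_leaf hp i hiz]; rfl]
    set a' := Function.update (aS n) i true with ha'
    have ha'i : a' i = true := Function.update_self _ _ _
    have ha'z : a' ⟨0, hp⟩ = true := by
      rw [ha', Function.update_of_ne (fun hh => hiz hh.symm), aS_z hp]
    rw [perceived_leaf hp _ _ _ _ _ hiz, perceived_leaf hp _ _ _ _ _ hiz,
      actualCost_false hp _ _ _ _ (aS_leaf hp i hiz), if_neg (by rw [aS_z hp]; simp),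
      actualCost_true _ _ _ _ (aS_z hp),
      actualCost_true _ _ _ _ ha'i, actualCost_true _ _ _ _ ha'z]
    rw [← sub_nonneg]
    rw [show 13 / (4 * (n:ℝ)) + 1 / 8 * (13 / (4 * n)) -
        (1 / n + 1 / 8 * (13 / (4 * n))) = 9 / (4 * n) by field_simp; ring]
    positivity

end Helpers7
section Helpers8
variable {n : ℕ}

lemma socialCost_aL (hn : 3 < n) :
    socialCost (starG n) (13 / (4 * (n:ℝ))) 1 (aL n) =
      ((n:ℝ) - 2) * (13 / (4 * (n:ℝ))) + 4 * 1 / n := by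
  have hp : 0 < n := by omega
  have hn4 : (4:ℝ) ≤ n := by exact_mod_cast hn
  have h : (n:ℝ) ≠ 0 := by linarith
  rw [socialCost_split hp, sum_leaf_cost_false hp _ _ _ (aL_z hp),
    actualCost_false hp _ _ _ _ (aL_z hp), if_pos (aL_z hp), insCard_aL hn]
  push_cast
  field_simp
  ring

lemma worst_aS (hn : 3 < n) (a : Fin n → Bool)
    (h : isFNE (starG n) (13 / (4 * (n:ℝ))) 1 (1/8) a) :
    socialCost (starG n) (13 / (4 * (n:ℝ))) 1 a ≤
      13 / (4 * (n:ℝ)) + ((n:ℝ) - 1) * 1 / n := by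
  have hp : 0 < n := by omega
  have hn4 : (4:ℝ) ≤ n := by exact_mod_cast hn
  have hn0 : (0:ℝ) < n := by linarith
  have hne : (n:ℝ) ≠ 0 := by linarith
  by_cases hz : a ⟨0, hp⟩ = true
  · -- center secure: every leaf must be insecure, so a = aS
    have hleaf : ∀ j, j ≠ (⟨0, hp⟩ : Fin n) → a j = false := by
      intro j hj
      by_contra hjf
      have hjt : a j = true := by revert hjf; cases a j <;> simp
      have hc := h j false
      set a' := Function.update a j false with ha'
      have ha'j : a' j = false := Function.update_self _ _ _
      have ha'z : a' ⟨0, hp⟩ = true := by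
        rw [ha', Function.update_of_ne (fun hh => hj hh.symm), hz]
      rw [perceived_leaf hp _ _ _ _ _ hj, perceived_leaf hp _ _ _ _ _ hj,
        actualCost_true _ _ _ _ hjt, actualCost_true _ _ _ _ hz,
        actualCost_false hp _ _ _ _ ha'j, if_neg (by rw [ha'z]; simp),
        actualCost_true _ _ _ _ ha'z] at hc
      rw [← sub_nonneg, show 1 / (n:ℝ) + 1 / 8 * (13 / (4 * n)) -
        (13 / (4 * n) + 1 / 8 * (13 / (4 * n))) = -(9 / (4 * n)) by
          field_simp; ring] at hc
      have : (0:ℝ) < 9 / (4 * n) := by positivity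
      linarith
    have haS : a = aS n := by
      funext j
      by_cases hj : j = (⟨0, hp⟩ : Fin n)
      · rw [hj, hz, aS_z hp]
      · rw [hleaf j hj, aS_leaf hp j hj]
    rw [haS, socialCost_aS hn]
  · exfalso
    have hz' : a ⟨0, hp⟩ = false := by revert hz; cases a (⟨0, hp⟩ : Fin n) <;> simp
    set t := insCard a with htdef
    have ht1 : 1 ≤ t := insCard_pos hp a _ hz'
    have hip : (Finset.univ.filter (fun j => a j = false)).card = t := rfl
    have htn : t ≤ n := insCard_le a
    -- Step 1: t ≥ 3
    have ht3 : 3 ≤ t := by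
      by_cases htn' : n ≤ t
      · omega
      · -- there is a secure leaf
        have hcard : (Finset.univ.filter (fun j => a j = true)).card = n - t := by
          have := card_filter_add (Finset.univ : Finset (Fin n)) a
          rw [Finset.card_univ, Fintype.card_fin] at this
          omega
        have hpos : 0 < (Finset.univ.filter (fun j => a j = true)).card := by omega
        obtain ⟨j, hj⟩ := Finset.card_pos.1 hpos
        have hjt : a j = true := (Finset.mem_filter.1 hj).2
        have hjz : j ≠ (⟨0, hp⟩ : Fin n) := by rintro rfl; rw [hz'] at hjt; simp at hjt
        have hc := h j false
        set a' := Function.update a j false with ha'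
        have ha'j : a' j = false := Function.update_self _ _ _
        have ha'z : a' ⟨0, hp⟩ = false := by
          rw [ha', Function.update_of_ne (fun hh => hjz hh.symm), hz']
        have hins' : insCard a' = t + 1 := by rw [ha', insCard_update_false _ _ hjt]
        rw [perceived_leaf hp _ _ _ _ _ hjz, perceived_leaf hp _ _ _ _ _ hjz,
          actualCost_true _ _ _ _ hjt,
          actualCost_false hp _ _ _ _ hz', if_pos hz',
          actualCost_false hp _ _ _ _ ha'j, if_pos ha'z,
          actualCost_false hp _ _ _ _ ha'z, if_pos ha'z, hins'] at hc
        push_cast at hc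
        by_contra hlt
        have ht2 : (t:ℝ) ≤ 2 := by exact_mod_cast (by omega : t ≤ 2)
        have ht0 : (0:ℝ) ≤ t := by positivity
        rw [← sub_nonneg, show 1 * ((t:ℝ) + 1) / n + 1 / 8 * (1 * ((t:ℝ) + 1) / n) -
          (13 / (4 * n) + 1 / 8 * (1 * (t:ℝ) / n)) = ((t:ℝ) + 1 + 1/8 - 13/4) / n by
            field_simp; ring] at hc
        have hneg : ((t:ℝ) + 1 + 1/8 - 13/4) / n < 0 := by
          apply div_neg_of_neg_of_pos _ hn0
          linarith
        linarith
    -- Step 2: t ≤ 3 via an insecure leaf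
    have hzmem : (⟨0, hp⟩ : Fin n) ∈ Finset.univ.filter (fun j => a j = false) := by
      simp [hz']
    have hcard2 : 0 < ((Finset.univ.filter (fun j => a j = false)).erase ⟨0, hp⟩).card := by
      rw [Finset.card_erase_of_mem hzmem, hip]
      omega
    obtain ⟨j, hj⟩ := Finset.card_pos.1 hcard2
    have hjz : j ≠ (⟨0, hp⟩ : Fin n) := (Finset.mem_erase.1 hj).1
    have hjf : a j = false := (Finset.mem_filter.1 (Finset.mem_erase.1 hj).2).2
    have ht3' : t ≤ 3 := by
      have hc := h j true
      set a' := Function.update a j true with ha'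
      have ha'j : a' j = true := Function.update_self _ _ _
      have ha'z : a' ⟨0, hp⟩ = false := by
        rw [ha', Function.update_of_ne (fun hh => hjz hh.symm), hz']
      have hins' : insCard a' = t - 1 := by rw [ha', insCard_update_true _ _ hjf]
      rw [perceived_leaf hp _ _ _ _ _ hjz, perceived_leaf hp _ _ _ _ _ hjz,
        actualCost_false hp _ _ _ _ hjf, if_pos hz',
        actualCost_false hp _ _ _ _ hz', if_pos hz',
        actualCost_true _ _ _ _ ha'j,
        actualCost_false hp _ _ _ _ ha'z, if_pos ha'z, hins',
        Nat.cast_sub ht1] at hc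
      push_cast at hc
      by_contra hlt
      have ht4 : (4:ℝ) ≤ t := by exact_mod_cast (by omega : 4 ≤ t)
      rw [← sub_nonneg, show 13 / (4 * (n:ℝ)) + 1 / 8 * (1 * ((t:ℝ) - 1) / n) -
        (1 * (t:ℝ) / n + 1 / 8 * (1 * (t:ℝ) / n)) = (13/4 - 1/8 - (t:ℝ)) / n by
          field_simp; ring] at hc
      have hneg : ((13:ℝ)/4 - 1/8 - (t:ℝ)) / n < 0 := by
        apply div_neg_of_neg_of_pos _ hn0
        linarith
      linarith
    have ht : t = 3 := by omega
    -- Step 3: center deviation gives contradiction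
    have hc := h (⟨0, hp⟩ : Fin n) true
    set a' := Function.update a (⟨0, hp⟩ : Fin n) true with ha'
    have ha'z : a' ⟨0, hp⟩ = true := Function.update_self _ _ _
    have hins' : insCard a' = 2 := by
      rw [ha', insCard_update_true _ _ hz', ← htdef, ht]
    rw [perceived_center hp, perceived_center hp,
      sum_leaf_cost_false hp _ _ _ hz',
      sum_leaf_cost_true hp _ _ _ ha'z,
      actualCost_false hp _ _ _ _ hz', if_pos hz',
      actualCost_true _ _ _ _ ha'z, hins', ← htdef, ht] at hc
    push_cast at hc
    rw [← sub_nonneg, show 13 / (4 * (n:ℝ)) + 1 / 8 * (2 * (1 / n) + ((n:ℝ) - 1 - 2) * (13 / (4 * n))) -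
      (1 * 3 / n + 1 / 8 * ((3 - 1) * (1 * 3 / n) + ((n:ℝ) - 3) * (13 / (4 * n)))) =
      -(1 / (4 * n)) by field_simp; ring] at hc
    have : (0:ℝ) < 1 / (4 * n) := by positivity
    linarith

end Helpers8

/-- Theorem (non-monotonicity of the Windfall of Friendship): for every `n > 3` there is an
instance on the star `S_n` and friendship factors `F_s = 1/8 < F_l = 3/4` with
`C = 5L/(2n) + F_l·L/n` such that under `F_l` there is an FNE in which the center and exactly
one leaf are insecure, of cost `(n−2)C + 4L/n`, while under `F_s` every FNE costs at most
`C + (n−1)L/n` (the cost of the FNE in which only the center is secure, which exists); and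
`(n−2)C + 4L/n > C + (n−1)L/n`. Hence the worst-FNE cost is strictly larger for the larger
friendship factor. -/
theorem stmt2 (n : ℕ) (hn : 3 < n) :
    ∃ C L Fs Fl : ℝ, 0 < L ∧ L / n < C ∧ C ≤ L ∧
      Fs = 1 / 8 ∧ Fl = 3 / 4 ∧ Fs < Fl ∧
      C = 5 * L / (2 * n) + Fl * L / n ∧
      (∃ a : Fin n → Bool, isFNE (starG n) C L Fl a ∧
        a ⟨0, by omega⟩ = false ∧
        (Finset.univ.filter (fun i => a i = false)).card = 2 ∧
        socialCost (starG n) C L a = ((n : ℝ) - 2) * C + 4 * L / n) ∧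
      isFNE (starG n) C L Fs (fun i => i.val == 0) ∧
      socialCost (starG n) C L (fun i => i.val == 0) = C + ((n : ℝ) - 1) * L / n ∧
      (∀ a : Fin n → Bool, isFNE (starG n) C L Fs a →
        socialCost (starG n) C L a ≤ C + ((n : ℝ) - 1) * L / n) ∧
      ((n : ℝ) - 2) * C + 4 * L / n > C + ((n : ℝ) - 1) * L / n := by
  have hp : 0 < n := by omega
  have hn4 : (4:ℝ) ≤ n := by exact_mod_cast hn
  have hn0 : (0:ℝ) < n := by linarith
  have hne : (n:ℝ) ≠ 0 := by linarith
  refine ⟨13 / (4 * (n:ℝ)), 1, 1/8, 3/4, one_pos, ?_, ?_, rfl, rfl, by norm_num, ?_,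
    ⟨aL n, fne_aL hn, aL_z hp, insCard_aL hn, socialCost_aL hn⟩,
    fne_aS hn, socialCost_aS hn, worst_aS hn, ?_⟩
  · rw [← sub_pos, show 13 / (4 * (n:ℝ)) - 1 / n = 9 / (4 * n) by field_simp; ring]
    positivity
  · rw [div_le_one (by positivity)]
    linarith
  · field_simp
    ring
  · rw [gt_iff_lt, ← sub_pos,
      show ((n:ℝ) - 2) * (13 / (4 * n)) + 4 * 1 / n - (13 / (4 * n) + ((n:ℝ) - 1) * 1 / n)
        = (9 * n - 19) / (4 * n) by field_simp; ring]
    apply div_pos (by linarith) (by positivity)
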